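/- For every exponent 0 ≤ α < 1 and every fixed t ∈ ℝ, the product P_{N,α}(t) converges to 1 as N → ∞. -/

import Mathlib

/-- Kac normalization `𝒩_α(N) = (2 ∑_{j=1}^{⌊N/2⌋} j^{−α})⁻¹`. -/
noncomputable def kacNorm (α : ℝ) (N : ℕ) : ℝ :=
  (2 * ∑ j ∈ Finset.Icc 1 (N / 2), (j : ℝ) ^ (-α))⁻¹

/-- The relaxation product `P_{N,α}(t) = ∏_{j=1}^{⌊N/2⌋} cos²(2 𝒩_α(N) t j^{−α})`. -/
noncomputable def relaxProd (α : ℝ) (N : ℕ) (t : ℝ) : ℝ :=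
  ∏ j ∈ Finset.Icc 1 (N / 2), Real.cos (2 * kacNorm α N * t * (j : ℝ) ^ (-α)) ^ 2

/-- Weierstrass product inequality: `1 - ∑ f ≤ ∏ (1 - f)` for `f` with values in `[0,1]`. -/
lemma weierstrass_prod {ι : Type*} (s : Finset ι) (f : ι → ℝ)
    (h0 : ∀ i ∈ s, 0 ≤ f i) (h1 : ∀ i ∈ s, f i ≤ 1) :
    1 - ∑ i ∈ s, f i ≤ ∏ i ∈ s, (1 - f i) := by
  induction s using Finset.cons_induction with
  | empty => simp
  | cons a s ha ih =>
    rw [Finset.prod_cons, Finset.sum_cons]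
    have h0a := h0 a (Finset.mem_cons_self _ _)
    have h1a := h1 a (Finset.mem_cons_self _ _)
    have ihs := ih (fun i hi => h0 i (Finset.mem_cons_of_mem hi))
      (fun i hi => h1 i (Finset.mem_cons_of_mem hi))
    have hsum0 : 0 ≤ ∑ i ∈ s, f i :=
      Finset.sum_nonneg fun i hi => h0 i (Finset.mem_cons_of_mem hi)
    nlinarith [ihs, h0a, h1a, hsum0]

/-- for every `0 ≤ α < 1` and every fixed `t`, `P_{N,α}(t) → 1` as `N → ∞`. -/
theorem stmt_2 (α : ℝ) (hα0 : 0 ≤ α) (hα1 : α < 1) (t : ℝ) :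
    Filter.Tendsto (fun N : ℕ => relaxProd α N t) Filter.atTop (nhds 1) := by
  set S : ℕ → ℝ := fun N => ∑ j ∈ Finset.Icc 1 (N / 2), (j : ℝ) ^ (-α) with hS
  -- lower bound on S
  have hSlb : ∀ N : ℕ, ((N / 2 : ℕ) : ℝ) ^ (1 - α) ≤ S N := by
    intro N
    rcases Nat.eq_zero_or_pos (N / 2) with h | h
    · simp [hS, h, Real.zero_rpow (by linarith : (1:ℝ) - α ≠ 0)]
    · set M := N / 2
      have hM1 : (1 : ℝ) ≤ (M : ℝ) := by exact_mod_cast h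
      have hMpos : (0 : ℝ) < (M : ℝ) := by linarith
      have hterm : ∀ j ∈ Finset.Icc 1 M, (M : ℝ) ^ (-α) ≤ (j : ℝ) ^ (-α) := by
        intro j hj
        rcases Finset.mem_Icc.1 hj with ⟨hj1, hjM⟩
        exact Real.rpow_le_rpow_of_nonpos (by exact_mod_cast hj1.trans_lt' Nat.zero_lt_one)
          (by exact_mod_cast hjM) (by linarith)
      calc ((M : ℕ) : ℝ) ^ (1 - α) = (M : ℝ) ^ (1 : ℝ) * (M : ℝ) ^ (-α) := by
            rw [← Real.rpow_add hMpos]; ring_nf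
        _ = (Finset.Icc 1 M).card • ((M : ℝ) ^ (-α)) := by
            rw [Nat.card_Icc]; simp [Real.rpow_one, nsmul_eq_mul]
        _ = ∑ _j ∈ Finset.Icc 1 M, (M : ℝ) ^ (-α) := (Finset.sum_const _).symm
        _ ≤ S N := Finset.sum_le_sum hterm
  -- S → ∞
  have hdiv : Filter.Tendsto (fun N : ℕ => N / 2) Filter.atTop Filter.atTop := by
    apply Filter.tendsto_atTop_atTop.2
    intro b
    exact ⟨2 * b, fun n hn => Nat.le_div_iff_mul_le two_pos |>.2 (by omega)⟩
  have hStop : Filter.Tendsto S Filter.atTop Filter.atTop := by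
    apply Filter.tendsto_atTop_mono hSlb
    exact (tendsto_rpow_atTop (by linarith)).comp (tendsto_natCast_atTop_atTop.comp hdiv)
  -- lower bound function tends to 1
  have hlow : Filter.Tendsto (fun N : ℕ => 1 - t ^ 2 * (S N)⁻¹) Filter.atTop (nhds 1) := by
    have : Filter.Tendsto (fun N : ℕ => t ^ 2 * (S N)⁻¹) Filter.atTop (nhds 0) := by
      simpa using (hStop.inv_tendsto_atTop).const_mul (t ^ 2)
    simpa using (tendsto_const_nhds (x := (1:ℝ))).sub this
  -- squeeze
  apply tendsto_of_tendsto_of_tendsto_of_le_of_le' hlow tendsto_const_nhds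
  · -- eventually: 1 - t²/S N ≤ relaxProd α N t
    filter_upwards [hStop.eventually (Filter.eventually_gt_atTop 0)] with N hSN
    have hSinv : (0 : ℝ) < (S N)⁻¹ := inv_pos.2 hSN
    have hkac : kacNorm α N = (2 * S N)⁻¹ := rfl
    have key : ∀ j ∈ Finset.Icc 1 (N / 2),
        (2 * kacNorm α N * t * (j : ℝ) ^ (-α)) ^ 2 ≤ t ^ 2 * (S N)⁻¹ ^ 2 * ((j : ℝ) ^ (-α)) := by
      intro j hj
      have hj1 : 1 ≤ j := (Finset.mem_Icc.1 hj).1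
      have hj1' : (1 : ℝ) ≤ (j : ℝ) := by exact_mod_cast hj1
      have hjpos : (0 : ℝ) < (j : ℝ) ^ (-α) :=
        Real.rpow_pos_of_pos (by linarith) _
      have hjle1 : (j : ℝ) ^ (-α) ≤ 1 :=
        Real.rpow_le_one_of_one_le_of_nonpos hj1' (by linarith)
      have h2k : 2 * kacNorm α N = (S N)⁻¹ := by
        rw [hkac, mul_inv, ← mul_assoc]
        norm_num
      rw [h2k]
      have : ((S N)⁻¹ * t * (j : ℝ) ^ (-α)) ^ 2
          = t ^ 2 * (S N)⁻¹ ^ 2 * ((j : ℝ) ^ (-α)) * ((j : ℝ) ^ (-α)) := by ring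
      rw [this]
      exact mul_le_of_le_one_right
        (mul_nonneg (mul_nonneg (sq_nonneg t) (sq_nonneg _)) hjpos.le) hjle1
    calc 1 - t ^ 2 * (S N)⁻¹
        ≤ 1 - ∑ j ∈ Finset.Icc 1 (N / 2),
            Real.sin (2 * kacNorm α N * t * (j : ℝ) ^ (-α)) ^ 2 := by
          have hsum : ∑ j ∈ Finset.Icc 1 (N / 2),
              Real.sin (2 * kacNorm α N * t * (j : ℝ) ^ (-α)) ^ 2 ≤ t ^ 2 * (S N)⁻¹ := by
            calc ∑ j ∈ Finset.Icc 1 (N / 2),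
                Real.sin (2 * kacNorm α N * t * (j : ℝ) ^ (-α)) ^ 2
                ≤ ∑ j ∈ Finset.Icc 1 (N / 2),
                    t ^ 2 * (S N)⁻¹ ^ 2 * ((j : ℝ) ^ (-α)) := by
                  apply Finset.sum_le_sum
                  intro j hj
                  exact (Real.sin_sq_le_sq).trans (key j hj)
              _ = t ^ 2 * (S N)⁻¹ ^ 2 * S N := by rw [← Finset.mul_sum]
              _ = t ^ 2 * (S N)⁻¹ := by
                  field_simp
          linarith
      _ ≤ relaxProd α N t := by
          unfold relaxProd
          have : ∀ j ∈ Finset.Icc 1 (N / 2),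
              Real.cos (2 * kacNorm α N * t * (j : ℝ) ^ (-α)) ^ 2
              = 1 - Real.sin (2 * kacNorm α N * t * (j : ℝ) ^ (-α)) ^ 2 := by
            intro j _
            rw [Real.cos_sq']
          rw [Finset.prod_congr rfl this]
          exact weierstrass_prod _ _ (fun i _ => sq_nonneg _)
            (fun i _ => Real.sin_sq_le_one _)
  · -- eventually: relaxProd ≤ 1
    filter_upwards with N
    apply Finset.prod_le_one (fun i _ => sq_nonneg _)
    intro i _
    rw [sq_le_one_iff_abs_le_one]
    exact Real.abs_cos_le_one _
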